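/- arXiv:1601.00607 — 2 statements merged into one kernel-verified Lean document; each statement's English description precedes it below -/
import Mathlib

section
/- Let q₁, q₂, h ∈ ℂ[x,y,z] be homogeneous polynomials of degrees k, k, and d - mk respectively (m ≥ 2 an integer), and set g = q₁·q₂·∏_{i=3}^{m}(q₁ + tᵢq₂) with distinct tᵢ ∈ ℂ*, f = g·h. Define the 2-form ω = a·dq₁∧dq₂ + b·dq₁∧dh + c·dq₂∧dh with a = -m·h, b = -q₂, c = q₁. Then ω ∧ df = 0. -/
open MvPolynomial

/-- Partial derivative of a polynomial on `ℂ³`. -/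
noncomputable def pd (i : Fin 3) (u : MvPolynomial (Fin 3) ℂ) : MvPolynomial (Fin 3) ℂ :=
  MvPolynomial.pderiv i u

/-- The Jacobian determinant `J(u,v,w)` of three polynomials on `ℂ³`,
so that `du ∧ dv ∧ dw = jac u v w · dx∧dy∧dz`. -/
noncomputable def jac (u v w : MvPolynomial (Fin 3) ℂ) : MvPolynomial (Fin 3) ℂ :=
  Matrix.det !![pd 0 u, pd 1 u, pd 2 u; pd 0 v, pd 1 v, pd 2 v; pd 0 w, pd 1 w, pd 2 w]

/-- The components of the two-form `du ∧ dv` in the basis `(dy∧dz, dz∧dx, dx∧dy)`. -/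
noncomputable def wedge2 (u v : MvPolynomial (Fin 3) ℂ) : Fin 3 → MvPolynomial (Fin 3) ℂ :=
  ![pd 1 u * pd 2 v - pd 2 u * pd 1 v,
    pd 2 u * pd 0 v - pd 0 u * pd 2 v,
    pd 0 u * pd 1 v - pd 1 u * pd 0 v]

lemma jac_expand (u v w : MvPolynomial (Fin 3) ℂ) :
    jac u v w = pd 0 u * pd 1 v * pd 2 w - pd 0 u * pd 2 v * pd 1 w
      - pd 1 u * pd 0 v * pd 2 w + pd 1 u * pd 2 v * pd 0 w
      + pd 2 u * pd 0 v * pd 1 w - pd 2 u * pd 1 v * pd 0 w := by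
  simp [jac, Matrix.det_fin_three]

lemma pd_mul (i : Fin 3) (a b : MvPolynomial (Fin 3) ℂ) :
    pd i (a * b) = a * pd i b + b * pd i a := by
  simp [pd, pderiv_mul]

lemma pd_add (i : Fin 3) (a b : MvPolynomial (Fin 3) ℂ) : pd i (a + b) = pd i a + pd i b := by
  simp [pd]

lemma pd_C_mul (i : Fin 3) (c : ℂ) (a : MvPolynomial (Fin 3) ℂ) :
    pd i (C c * a) = C c * pd i a := by
  simp [pd]

lemma jac_mul₃ (u v a b : MvPolynomial (Fin 3) ℂ) :
    jac u v (a * b) = a * jac u v b + b * jac u v a := by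
  simp only [jac_expand, pd_mul]; ring

lemma jac_self₁ (u v : MvPolynomial (Fin 3) ℂ) : jac u v u = 0 := by
  simp only [jac_expand]; ring

lemma jac_self₂ (u v : MvPolynomial (Fin 3) ℂ) : jac u v v = 0 := by
  simp only [jac_expand]; ring

lemma jac_cyclic (u v w : MvPolynomial (Fin 3) ℂ) : jac v w u = jac u v w := by
  simp only [jac_expand]; ring

lemma jac_swap₂₃ (u v w : MvPolynomial (Fin 3) ℂ) : jac u w v = - jac u v w := by
  simp only [jac_expand]; ring

lemma jac_add₃ (u v a b : MvPolynomial (Fin 3) ℂ) :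
    jac u v (a + b) = jac u v a + jac u v b := by
  simp only [jac_expand, pd_add]; ring

lemma jac_C_mul₃ (u v : MvPolynomial (Fin 3) ℂ) (c : ℂ) (a : MvPolynomial (Fin 3) ℂ) :
    jac u v (C c * a) = C c * jac u v a := by
  simp only [jac_expand, pd_C_mul]; ring

lemma pencil_jac {ι : Type*} (s : Finset ι) (c : ι → ℂ)
    (q₁ q₂ h : MvPolynomial (Fin 3) ℂ) :
    jac q₁ q₂ (∏ i ∈ s, (q₁ + C (c i) * q₂)) = 0 ∧
    q₁ * jac q₂ h (∏ i ∈ s, (q₁ + C (c i) * q₂))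
      - q₂ * jac q₁ h (∏ i ∈ s, (q₁ + C (c i) * q₂))
      = (s.card : MvPolynomial (Fin 3) ℂ) * (∏ i ∈ s, (q₁ + C (c i) * q₂)) * jac q₁ q₂ h := by
  classical
  induction s using Finset.induction_on with
  | empty =>
      constructor
      · simp [jac_expand, pd]
      · simp [jac_expand, pd]
  | @insert j s hj ih =>
      obtain ⟨ih1, ih2⟩ := ih
      rw [Finset.prod_insert hj]
      set P := ∏ i ∈ s, (q₁ + C (c i) * q₂) with hP
      have h1 : jac q₁ q₂ (q₁ + C (c j) * q₂) = 0 := by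
        rw [jac_add₃, jac_C_mul₃, jac_self₁, jac_self₂]; ring
      have h2 : jac q₂ h (q₁ + C (c j) * q₂) = jac q₁ q₂ h := by
        rw [jac_add₃, jac_C_mul₃, jac_self₁, jac_cyclic]; ring
      have h3 : jac q₁ h (q₁ + C (c j) * q₂) = - C (c j) * jac q₁ q₂ h := by
        rw [jac_add₃, jac_C_mul₃, jac_self₁, jac_swap₂₃]; ring
      constructor
      · rw [jac_mul₃, h1, ih1]; ring
      · rw [jac_mul₃, jac_mul₃, h2, h3, Finset.card_insert_of_notMem hj]
        push_cast
        linear_combination (q₁ + C (c j) * q₂) * ih2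

/-- The 2-form `ω = -mh·dq₁∧dq₂ - q₂·dq₁∧dh + q₁·dq₂∧dh` satisfies `ω ∧ df = 0`,
where `f = q₁q₂⋯q_m·h` is a product of `m` members of the pencil `⟨q₁,q₂⟩` times `h`.
The 3-form `ω ∧ df` equals the displayed polynomial times `dx∧dy∧dz`. -/
theorem omega_wedge_df_eq_zero
    (k d m : ℕ) (hm : 2 ≤ m) (hkd : m * k ≤ d)
    (q₁ q₂ h f : MvPolynomial (Fin 3) ℂ)
    (hq₁ : q₁.IsHomogeneous k) (hq₂ : q₂.IsHomogeneous k)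
    (hh : h.IsHomogeneous (d - m * k))
    (t : Fin (m - 2) → ℂ) (ht : Function.Injective t) (ht0 : ∀ i, t i ≠ 0)
    (hf : f = q₁ * q₂ * (∏ i, (q₁ + C (t i) * q₂)) * h) :
    (-(C (m : ℂ)) * h) * jac q₁ q₂ f + (-q₂) * jac q₁ h f + q₁ * jac q₂ h f = 0 := by
  subst hf
  classical
  obtain ⟨hA, hB⟩ := pencil_jac (Finset.univ : Finset (Fin (m - 2))) t q₁ q₂ h
  set P := ∏ i, (q₁ + C (t i) * q₂) with hPdef
  have hc : (((Finset.univ : Finset (Fin (m - 2))).card : ℕ) : MvPolynomial (Fin 3) ℂ)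
      = C (m : ℂ) - 2 := by
    rw [Finset.card_univ, Fintype.card_fin, Nat.cast_sub hm]
    push_cast
    simp [map_natCast]
  rw [hc] at hB
  have e1 : jac q₁ q₂ (q₁ * q₂ * P * h) = q₁ * q₂ * P * jac q₁ q₂ h := by
    rw [jac_mul₃, jac_mul₃, jac_mul₃, hA, jac_self₁ q₁ q₂, jac_self₂ q₁ q₂]; ring
  have e2 : jac q₁ h (q₁ * q₂ * P * h)
      = h * (q₁ * q₂ * jac q₁ h P) - q₁ * P * h * jac q₁ q₂ h := by
    rw [jac_mul₃, jac_mul₃, jac_mul₃, jac_self₁ q₁ h, jac_self₂ q₁ h,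
      jac_swap₂₃ q₁ q₂ h]; ring
  have e3 : jac q₂ h (q₁ * q₂ * P * h)
      = h * (q₁ * q₂ * jac q₂ h P) + q₂ * P * h * jac q₁ q₂ h := by
    rw [jac_mul₃, jac_mul₃, jac_mul₃, jac_self₁ q₂ h, jac_self₂ q₂ h,
      jac_cyclic q₁ q₂ h]; ring
  rw [e1, e2, e3]
  linear_combination q₁ * q₂ * h * hB
end

section
/- With the notation of the previous statements (q₁, q₂ homogeneous of degree k, h homogeneous of degree d-mk, ω = -mh·dq₁∧dq₂ - q₂·dq₁∧dh + q₁·dq₂∧dh), one has J(q₁,q₂,h)·Δ(dx∧dy∧dz) = k·ω + d·h·dq₁∧dq₂. -/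
open MvPolynomial

/-- Euler's identity for homogeneous polynomials on `ℂ³`. -/
lemma euler_id {n : ℕ} {φ : MvPolynomial (Fin 3) ℂ} (hφ : φ.IsHomogeneous n) :
    ∑ j : Fin 3, X j * MvPolynomial.pderiv j φ = C (n : ℂ) * φ := by
  conv_lhs => rw [φ.as_sum]
  conv_rhs => rw [φ.as_sum]
  rw [Finset.mul_sum]
  simp only [map_sum, Finset.mul_sum]
  rw [Finset.sum_comm]
  refine Finset.sum_congr rfl fun s hs => ?_
  have hdeg : ∑ j : Fin 3, s j = n := by
    have := hφ (mem_support_iff.mp hs)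
    simpa [Finsupp.weight_apply, Finsupp.sum_fintype] using this
  simp only [pderiv_monomial]
  have step : ∀ j : Fin 3, X j * monomial (s - Finsupp.single j 1) (coeff s φ * (s j : ℂ))
      = monomial s ((s j : ℂ) * coeff s φ) := by
    intro j
    by_cases hj : s j = 0
    · simp [hj]
    · have hsum : Finsupp.single j 1 + (s - Finsupp.single j 1) = s := by
        ext a
        rcases eq_or_ne a j with rfl | ha
        · simp [Finsupp.single_apply]; omega
        · simp [Finsupp.single_apply, Ne.symm ha, ha]
      calc X j * monomial (s - Finsupp.single j 1) (coeff s φ * (s j : ℂ))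
          = X j ^ 1 * monomial (s - Finsupp.single j 1) (coeff s φ * (s j : ℂ)) := by rw [pow_one]
        _ = monomial (Finsupp.single j 1 + (s - Finsupp.single j 1)) (coeff s φ * (s j : ℂ)) := by
            rw [monomial_single_add]
        _ = monomial s ((s j : ℂ) * coeff s φ) := by rw [hsum, mul_comm]
  rw [Finset.sum_congr rfl fun j _ => step j]
  rw [← map_sum, ← Finset.sum_mul, C_mul_monomial]
  congr 1
  rw [← hdeg]
  push_cast
  ring

/-- `J(q₁,q₂,h)·Δ(dx∧dy∧dz) = k·ω + d·h·dq₁∧dq₂`, where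
`ω = -mh·dq₁∧dq₂ - q₂·dq₁∧dh + q₁·dq₂∧dh`, stated componentwise in the
basis `(dy∧dz, dz∧dx, dx∧dy)` with `Δ(dx∧dy∧dz) = (x, y, z)`. -/
theorem jacobian_times_euler_contraction
    (k d m : ℕ) (hm : 2 ≤ m) (hkd : m * k ≤ d)
    (q₁ q₂ h : MvPolynomial (Fin 3) ℂ)
    (hq₁ : q₁.IsHomogeneous k) (hq₂ : q₂.IsHomogeneous k)
    (hh : h.IsHomogeneous (d - m * k)) :
    ∀ i : Fin 3,
      jac q₁ q₂ h * X i
        = C (k : ℂ) *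
            ((-(C (m : ℂ)) * h) * wedge2 q₁ q₂ i
              + (-q₂) * wedge2 q₁ h i + q₁ * wedge2 q₂ h i)
          + C (d : ℂ) * h * wedge2 q₁ q₂ i := by
  have e1 : X 0 * pd 0 q₁ + X 1 * pd 1 q₁ + X 2 * pd 2 q₁ = C (k : ℂ) * q₁ := by
    have := euler_id hq₁
    simpa [pd, Fin.sum_univ_three] using this
  have e2 : X 0 * pd 0 q₂ + X 1 * pd 1 q₂ + X 2 * pd 2 q₂ = C (k : ℂ) * q₂ := by
    have := euler_id hq₂
    simpa [pd, Fin.sum_univ_three] using this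
  have e3 : X 0 * pd 0 h + X 1 * pd 1 h + X 2 * pd 2 h
      = (C (d : ℂ) - C (m : ℂ) * C (k : ℂ)) * h := by
    have := euler_id hh
    simp only [pd, Fin.sum_univ_three] at this ⊢
    rw [this]
    congr 1
    rw [← C_mul, ← C_sub]
    congr 1
    rw [Nat.cast_sub hkd]
    push_cast
    ring
  intro i
  fin_cases i <;>
    simp only [jac, wedge2, Matrix.det_fin_three, Matrix.cons_val', Matrix.cons_val_zero,
      Matrix.cons_val_one, Matrix.head_cons, Matrix.empty_val', Matrix.cons_val_fin_one,
      Matrix.head_fin_const, Matrix.cons_val_two, Matrix.tail_cons, Fin.isValue,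
      Fin.zero_eta, Fin.mk_one, Matrix.of_apply, Fin.reduceFinMk]
  · linear_combination (pd 1 q₂ * pd 2 h - pd 2 q₂ * pd 1 h) * e1
      - (pd 1 q₁ * pd 2 h - pd 2 q₁ * pd 1 h) * e2
      + (pd 1 q₁ * pd 2 q₂ - pd 2 q₁ * pd 1 q₂) * e3
  · linear_combination (pd 2 q₂ * pd 0 h - pd 0 q₂ * pd 2 h) * e1
      - (pd 2 q₁ * pd 0 h - pd 0 q₁ * pd 2 h) * e2
      + (pd 2 q₁ * pd 0 q₂ - pd 0 q₁ * pd 2 q₂) * e3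
  · linear_combination (pd 0 q₂ * pd 1 h - pd 1 q₂ * pd 0 h) * e1
      - (pd 0 q₁ * pd 1 h - pd 1 q₁ * pd 0 h) * e2
      + (pd 0 q₁ * pd 1 q₂ - pd 1 q₁ * pd 0 q₂) * e3
end
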